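/- Define Q₂(φ)(x) := inf_{y ∈ ℝ^d} { φ(y) + |x − y|² } for a convex function φ : ℝ^d → ℝ bounded below by an affine function. Then for any μ, ν ∈ P₂(ℝ^d) and any ξ ∈ P₂(ℝ^d) with ξ ⪯ ν in convex order, the weak duality inequality holds: ∫ Q₂(φ) dμ − ∫ φ dν ≤ W₂²(μ, ξ). -/

import Mathlib

open MeasureTheory
noncomputable section

/-- Convex order: `μ ⪯ ν` iff `∫ φ dμ ≤ ∫ φ dν` for every convex `φ` for which
both integrals exist. -/
def ConvexOrder {d : ℕ} (μ ν : Measure (EuclideanSpace ℝ (Fin d))) : Prop :=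
  ∀ φ : EuclideanSpace ℝ (Fin d) → ℝ, ConvexOn ℝ Set.univ φ →
    Integrable φ μ → Integrable φ ν → ∫ x, φ x ∂μ ≤ ∫ x, φ x ∂ν

/-- Finite second moment. -/
def HasP2 {d : ℕ} (μ : Measure (EuclideanSpace ℝ (Fin d))) : Prop :=
  Integrable (fun x => ‖x‖ ^ 2) μ

/-- The 2-Wasserstein distance, as an infimum over couplings. -/
def W2 {d : ℕ} (μ ν : Measure (EuclideanSpace ℝ (Fin d))) : ℝ :=
  sInf { r : ℝ |
    ∃ π : Measure (EuclideanSpace ℝ (Fin d) × EuclideanSpace ℝ (Fin d)),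
      π.map Prod.fst = μ ∧ π.map Prod.snd = ν ∧
      r = (∫ p, dist p.1 p.2 ^ 2 ∂π) ^ (1 / 2 : ℝ) }

/-- Backward Wasserstein projection distance `W₂(μ, P_{⪯ν})`. -/
def W2projB {d : ℕ} (μ ν : Measure (EuclideanSpace ℝ (Fin d))) : ℝ :=
  sInf { r : ℝ | ∃ η : Measure (EuclideanSpace ℝ (Fin d)),
    IsProbabilityMeasure η ∧ HasP2 η ∧ ConvexOrder η ν ∧ r = W2 μ η }

/-- Forward Wasserstein projection distance `W₂(P_{μ⪯}, ν)`. -/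
def W2projF {d : ℕ} (μ ν : Measure (EuclideanSpace ℝ (Fin d))) : ℝ :=
  sInf { r : ℝ | ∃ η : Measure (EuclideanSpace ℝ (Fin d)),
    IsProbabilityMeasure η ∧ HasP2 η ∧ ConvexOrder μ η ∧ r = W2 η ν }

/-- Convolution `γ ∗ μ`: the law of `Z + X` with `Z ∼ γ`, `X ∼ μ` independent. -/
def mconv {d : ℕ} (γ μ : Measure (EuclideanSpace ℝ (Fin d))) :
    Measure (EuclideanSpace ℝ (Fin d)) :=
  (γ.prod μ).map (fun p => p.1 + p.2)

end

open MeasureTheory Filter Topology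

noncomputable section WDAux

variable {d : ℕ}

namespace WDAux

/-- Lipschitz inf-convolution regularization. -/
def lip (φ : EuclideanSpace ℝ (Fin d) → ℝ) (M : ℝ) (y : EuclideanSpace ℝ (Fin d)) : ℝ :=
  ⨅ z : EuclideanSpace ℝ (Fin d), (φ z + M * ‖y - z‖)

variable {φ : EuclideanSpace ℝ (Fin d) → ℝ} {a : EuclideanSpace ℝ (Fin d) →L[ℝ] ℝ} {b M : ℝ}

lemma aff_le (hab : ∀ y, a y + b ≤ φ y) (hM : ‖a‖ ≤ M)
    (y z : EuclideanSpace ℝ (Fin d)) : a y + b ≤ φ z + M * ‖y - z‖ := by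
  have h1 : a y - a z ≤ ‖a‖ * ‖y - z‖ := by
    have h := a.le_opNorm (y - z)
    rw [Real.norm_eq_abs] at h
    have := (abs_le.mp h).2
    simpa [map_sub] using this
  have h2 := hab z
  nlinarith [norm_nonneg (y - z)]

lemma bdd (hab : ∀ y, a y + b ≤ φ y) (hM : ‖a‖ ≤ M) (y : EuclideanSpace ℝ (Fin d)) :
    BddBelow (Set.range fun z => φ z + M * ‖y - z‖) :=
  ⟨a y + b, by rintro r ⟨z, rfl⟩; exact aff_le hab hM y z⟩

lemma lip_le (hab : ∀ y, a y + b ≤ φ y) (hM : ‖a‖ ≤ M) (y : EuclideanSpace ℝ (Fin d)) :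
    lip φ M y ≤ φ y := by
  simpa [lip] using ciInf_le (bdd hab hM y) y

lemma le_lip (hab : ∀ y, a y + b ≤ φ y) (hM : ‖a‖ ≤ M) (y : EuclideanSpace ℝ (Fin d)) :
    a y + b ≤ lip φ M y :=
  le_ciInf (aff_le hab hM y)

lemma lip_lipschitz (hab : ∀ y, a y + b ≤ φ y) (hM : ‖a‖ ≤ M)
    (y y' : EuclideanSpace ℝ (Fin d)) : lip φ M y ≤ lip φ M y' + M * ‖y - y'‖ := by
  have hM0 : 0 ≤ M := le_trans (norm_nonneg a) hM
  rw [show lip φ M y' + M * ‖y - y'‖ = ⨅ z, (φ z + M * ‖y' - z‖ + M * ‖y - y'‖) from ?_]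
  · refine le_ciInf fun z => ?_
    refine le_trans (ciInf_le (bdd hab hM y) z) ?_
    have : ‖y - z‖ ≤ ‖y - y'‖ + ‖y' - z‖ := by
      simpa using norm_sub_le_norm_sub_add_norm_sub y y' z
    nlinarith
  · rw [lip]
    exact ciInf_add (bdd hab hM y') _

lemma lip_abs_le (hab : ∀ y, a y + b ≤ φ y) (hM : ‖a‖ ≤ M) (y : EuclideanSpace ℝ (Fin d)) :
    |lip φ M y| ≤ |lip φ M 0| + M * ‖y‖ := by
  have hM0 : 0 ≤ M := le_trans (norm_nonneg a) hM
  have h1 := lip_lipschitz hab hM y 0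
  have h2 := lip_lipschitz hab hM 0 y
  rw [abs_le]
  constructor
  · have := neg_abs_le (lip φ M 0)
    simp only [zero_sub, norm_neg] at h2
    nlinarith
  · have := le_abs_self (lip φ M 0)
    simp only [sub_zero] at h1
    nlinarith

lemma lip_convexOn (hφ : ConvexOn ℝ Set.univ φ) (hab : ∀ y, a y + b ≤ φ y) (hM : ‖a‖ ≤ M) :
    ConvexOn ℝ Set.univ (lip φ M) := by
  have hM0 : 0 ≤ M := le_trans (norm_nonneg a) hM
  refine ⟨convex_univ, fun x _ y _ s t hs ht hst => ?_⟩
  simp only [smul_eq_mul, lip]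
  rw [Real.mul_iInf_of_nonneg hs, Real.mul_iInf_of_nonneg ht]
  refine le_ciInf_add_ciInf fun z w => ?_
  refine le_trans (ciInf_le (bdd hab hM _) (s • z + t • w)) ?_
  have hφ' := hφ.2 (Set.mem_univ z) (Set.mem_univ w) hs ht hst
  simp only [smul_eq_mul] at hφ'
  have hnorm : ‖(s • x + t • y) - (s • z + t • w)‖ ≤ s * ‖x - z‖ + t * ‖y - w‖ := by
    have : (s • x + t • y) - (s • z + t • w) = s • (x - z) + t • (y - w) := by
      module
    rw [this]
    refine le_trans (norm_add_le _ _) ?_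
    rw [norm_smul, norm_smul, Real.norm_eq_abs, Real.norm_eq_abs, abs_of_nonneg hs,
      abs_of_nonneg ht]
  nlinarith [norm_nonneg ((s • x + t • y) - (s • z + t • w))]

lemma lip_mono (hab : ∀ y, a y + b ≤ φ y) {M' : ℝ} (hM : ‖a‖ ≤ M) (hMM' : M ≤ M')
    (y : EuclideanSpace ℝ (Fin d)) : lip φ M y ≤ lip φ M' y := by
  refine le_ciInf fun z => ?_
  refine le_trans (ciInf_le (bdd hab hM y) z) ?_
  have := norm_nonneg (y - z)
  nlinarith

lemma lip_tendsto (hφc : Continuous φ) (hab : ∀ y, a y + b ≤ φ y)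
    (y : EuclideanSpace ℝ (Fin d)) :
    Tendsto (fun n : ℕ => lip φ (‖a‖ + n) y) atTop (𝓝 (φ y)) := by
  rw [Metric.tendsto_atTop]
  intro ε hε
  -- continuity at y
  obtain ⟨δ, hδ, hcont⟩ := Metric.continuousAt_iff.mp hφc.continuousAt (ε / 2) (by linarith)
  obtain ⟨N, hN⟩ := exists_nat_ge ((φ y - (a y + b)) / δ)
  refine ⟨N, fun n hn => ?_⟩
  have hMn : ‖a‖ ≤ ‖a‖ + (n : ℝ) := le_add_of_nonneg_right (Nat.cast_nonneg n)
  have hub := lip_le hab hMn y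
  have hlb : φ y - ε / 2 ≤ lip φ (‖a‖ + n) y := by
    refine le_ciInf fun z => ?_
    by_cases hz : ‖y - z‖ < δ
    · have := hcont (show dist z y < δ by rw [dist_eq_norm, norm_sub_rev]; exact hz)
      rw [Real.dist_eq, abs_lt] at this
      have h0 : 0 ≤ (‖a‖ + (n : ℝ)) * ‖y - z‖ := by positivity
      linarith [this.1]
    · push_neg at hz
      have h1 : a z + b ≤ φ z := hab z
      have h2 : a y - a z ≤ ‖a‖ * ‖y - z‖ := by
        have h := a.le_opNorm (y - z)
        rw [Real.norm_eq_abs] at h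
        simpa [map_sub] using (abs_le.mp h).2
      have h3 : ((φ y - (a y + b)) / δ) * δ ≤ (n : ℝ) * ‖y - z‖ := by
        have hnn : ((φ y - (a y + b)) / δ) ≤ (n : ℝ) :=
          hN.trans (by exact_mod_cast Nat.cast_le.mpr hn)
        have hc0 : 0 ≤ (φ y - (a y + b)) / δ :=
          div_nonneg (by linarith [hab y]) hδ.le
        nlinarith
      rw [div_mul_cancel₀ _ (ne_of_gt hδ)] at h3
      nlinarith [norm_nonneg (y - z)]
  rw [Real.dist_eq, abs_lt]
  constructor <;> nlinarith


lemma integrable_norm {μ : Measure (EuclideanSpace ℝ (Fin d))} [IsProbabilityMeasure μ]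
    (hμ2 : Integrable (fun x => ‖x‖ ^ 2) μ) :
    Integrable (fun y : EuclideanSpace ℝ (Fin d) => ‖y‖) μ := by
  refine Integrable.mono (g := fun y => 1 + ‖y‖ ^ 2) ((integrable_const 1).add hμ2) ?_ ?_
  · exact continuous_norm.aestronglyMeasurable
  · refine Filter.Eventually.of_forall fun y => ?_
    show ‖‖y‖‖ ≤ ‖1 + ‖y‖ ^ 2‖
    rw [Real.norm_eq_abs, abs_of_nonneg (norm_nonneg y), Real.norm_eq_abs,
      abs_of_nonneg (by positivity)]
    nlinarith [sq_nonneg (‖y‖ - 1)]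

lemma integrable_affine {μ : Measure (EuclideanSpace ℝ (Fin d))} [IsProbabilityMeasure μ]
    (hμ2 : Integrable (fun x => ‖x‖ ^ 2) μ) (a : EuclideanSpace ℝ (Fin d) →L[ℝ] ℝ) (b : ℝ) :
    Integrable (fun y => a y + b) μ := by
  refine Integrable.mono (g := fun y => ‖a‖ * ‖y‖ + |b|)
    (((integrable_norm hμ2).const_mul ‖a‖).add (integrable_const |b|)) ?_ ?_
  · exact (a.continuous.add continuous_const).aestronglyMeasurable
  · refine Filter.Eventually.of_forall fun y => ?_
    have h1 : |a y| ≤ ‖a‖ * ‖y‖ := by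
      have := a.le_opNorm y
      rwa [Real.norm_eq_abs] at this
    rw [Real.norm_eq_abs, Real.norm_eq_abs]
    have h2 : 0 ≤ ‖a‖ * ‖y‖ + |b| := by positivity
    rw [abs_of_nonneg h2]
    calc |a y + b| ≤ |a y| + |b| := abs_add_le _ _
      _ ≤ ‖a‖ * ‖y‖ + |b| := by linarith

lemma lip_continuous (hφ : ConvexOn ℝ Set.univ φ) (hab : ∀ y, a y + b ≤ φ y) (hM : ‖a‖ ≤ M) :
    Continuous (lip φ M) :=
  continuousOn_univ.mp ((lip_convexOn hφ hab hM).continuousOn isOpen_univ)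

lemma lip_integrable (hφ : ConvexOn ℝ Set.univ φ) (hab : ∀ y, a y + b ≤ φ y) (hM : ‖a‖ ≤ M)
    {μ : Measure (EuclideanSpace ℝ (Fin d))} [IsProbabilityMeasure μ]
    (hμ2 : Integrable (fun x => ‖x‖ ^ 2) μ) : Integrable (lip φ M) μ := by
  have hM0 : 0 ≤ M := le_trans (norm_nonneg a) hM
  refine Integrable.mono (g := fun y => |lip φ M 0| + M * ‖y‖)
    ((integrable_const _).add ((integrable_norm hμ2).const_mul M)) ?_ ?_
  · exact (lip_continuous hφ hab hM).aestronglyMeasurable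
  · refine Filter.Eventually.of_forall fun y => ?_
    show ‖lip φ M y‖ ≤ ‖|lip φ M 0| + M * ‖y‖‖
    have h0 : (0:ℝ) ≤ |lip φ M 0| + M * ‖y‖ := by
      have := mul_nonneg hM0 (norm_nonneg y)
      have := abs_nonneg (lip φ M 0)
      linarith
    rw [Real.norm_eq_abs, Real.norm_eq_abs, abs_of_nonneg h0]
    exact lip_abs_le hab hM y

lemma integrable_and_le (hφ : ConvexOn ℝ Set.univ φ) (hab : ∀ y, a y + b ≤ φ y)
    (ξ ν : Measure (EuclideanSpace ℝ (Fin d)))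
    [IsProbabilityMeasure ξ] [IsProbabilityMeasure ν]
    (hξ2 : Integrable (fun x => ‖x‖ ^ 2) ξ) (hν2 : Integrable (fun x => ‖x‖ ^ 2) ν)
    (hξν : ∀ ψ : EuclideanSpace ℝ (Fin d) → ℝ, ConvexOn ℝ Set.univ ψ →
      Integrable ψ ξ → Integrable ψ ν → ∫ x, ψ x ∂ξ ≤ ∫ x, ψ x ∂ν)
    (hint2 : Integrable φ ν) :
    Integrable φ ξ ∧ ∫ y, φ y ∂ξ ≤ ∫ y, φ y ∂ν := by
  have hφc : Continuous φ := continuousOn_univ.mp (hφ.continuousOn isOpen_univ)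
  have hMn : ∀ n : ℕ, ‖a‖ ≤ ‖a‖ + (n : ℝ) := fun n => le_add_of_nonneg_right (Nat.cast_nonneg n)
  have hlintξ : ∀ n : ℕ, Integrable (lip φ (‖a‖ + n)) ξ :=
    fun n => lip_integrable hφ hab (hMn n) hξ2
  have hlintν : ∀ n : ℕ, Integrable (lip φ (‖a‖ + n)) ν :=
    fun n => lip_integrable hφ hab (hMn n) hν2
  have hbound : ∀ n : ℕ, ∫ y, lip φ (‖a‖ + n) y ∂ξ ≤ ∫ y, φ y ∂ν := fun n =>
    (hξν _ (lip_convexOn hφ hab (hMn n)) (hlintξ n) (hlintν n)).trans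
      (integral_mono (hlintν n) hint2 (lip_le hab (hMn n)))
  have haint : Integrable (fun y => a y + b) ξ := integrable_affine hξ2 a b
  have hacont : Continuous fun y : EuclideanSpace ℝ (Fin d) => a y + b :=
    a.continuous.add continuous_const
  -- Fatou to get integrability of φ w.r.t. ξ
  set B : ℝ := ∫ y, φ y ∂ν - ∫ y, (a y + b) ∂ξ with hB
  have hgn_int : ∀ n : ℕ, Integrable (fun y => lip φ (‖a‖ + n) y - (a y + b)) ξ :=
    fun n => (hlintξ n).sub haint
  have hgn_nonneg : ∀ (n : ℕ) y, 0 ≤ lip φ (‖a‖ + n) y - (a y + b) :=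
    fun n y => by linarith [le_lip hab (hMn n) y]
  have hgnB : ∀ n : ℕ, ∫ y, (lip φ (‖a‖ + n) y - (a y + b)) ∂ξ ≤ B := fun n => by
    rw [integral_sub (hlintξ n) haint]
    have := hbound n
    simp only [hB]
    linarith
  have hlim : ∀ y, Filter.Tendsto (fun n : ℕ => ENNReal.ofReal (lip φ (‖a‖ + n) y - (a y + b)))
      atTop (𝓝 (ENNReal.ofReal (φ y - (a y + b)))) := fun y =>
    (ENNReal.continuous_ofReal.tendsto _).comp ((lip_tendsto hφc hab y).sub tendsto_const_nhds)
  have hfatou : ∫⁻ y, ENNReal.ofReal (φ y - (a y + b)) ∂ξ ≤ ENNReal.ofReal B := by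
    have h1 : ∫⁻ y, ENNReal.ofReal (φ y - (a y + b)) ∂ξ
        = ∫⁻ y, Filter.liminf (fun n : ℕ => ENNReal.ofReal (lip φ (‖a‖ + n) y - (a y + b)))
            atTop ∂ξ :=
      lintegral_congr fun y => ((hlim y).liminf_eq).symm
    rw [h1]
    refine le_trans (lintegral_liminf_le fun n =>
      (((lip_continuous hφ hab (hMn n)).sub hacont).measurable).ennreal_ofReal) ?_
    have h2 : ∀ n : ℕ, ∫⁻ y, ENNReal.ofReal (lip φ (‖a‖ + n) y - (a y + b)) ∂ξ
        ≤ ENNReal.ofReal B := fun n => by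
      rw [← ofReal_integral_eq_lintegral_ofReal (hgn_int n)
        (Filter.Eventually.of_forall (hgn_nonneg n))]
      exact ENNReal.ofReal_le_ofReal (hgnB n)
    refine le_trans (Filter.liminf_le_liminf (v := fun _ : ℕ => ENNReal.ofReal B)
      (Filter.Eventually.of_forall h2)) ?_
    simp [Filter.liminf_const]
  have hgint : Integrable (fun y => φ y - (a y + b)) ξ := by
    refine ⟨(hφc.sub hacont).aestronglyMeasurable, ?_⟩
    rw [hasFiniteIntegral_iff_norm]
    have heq : ∀ y, ENNReal.ofReal ‖φ y - (a y + b)‖ = ENNReal.ofReal (φ y - (a y + b)) :=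
      fun y => by rw [Real.norm_eq_abs, abs_of_nonneg (by linarith [hab y])]
    calc ∫⁻ y, ENNReal.ofReal ‖φ y - (a y + b)‖ ∂ξ
        = ∫⁻ y, ENNReal.ofReal (φ y - (a y + b)) ∂ξ := lintegral_congr heq
      _ ≤ ENNReal.ofReal B := hfatou
      _ < ⊤ := ENNReal.ofReal_lt_top
  have hφint : Integrable φ ξ := by
    refine (hgint.add haint).congr (Filter.Eventually.of_forall fun y => by simp)
  have hmono : ∀ᵐ y ∂ξ, Monotone fun n : ℕ => lip φ (‖a‖ + n) y :=
    Filter.Eventually.of_forall fun y n m hnm =>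
      lip_mono hab (hMn n) (add_le_add le_rfl (Nat.cast_le.mpr hnm)) y
  have htend := integral_tendsto_of_tendsto_of_monotone hlintξ hφint hmono
    (Filter.Eventually.of_forall (lip_tendsto hφc hab))
  exact ⟨hφint, le_of_tendsto htend (Filter.Eventually.of_forall hbound)⟩


lemma q2_bddBelow (hab : ∀ y, a y + b ≤ φ y) (x : EuclideanSpace ℝ (Fin d)) :
    BddBelow (Set.range fun y => φ y + ‖x - y‖ ^ 2) := by
  refine ⟨a x + b - ‖a‖ ^ 2 / 4, ?_⟩
  rintro r ⟨y, rfl⟩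
  have h1 := hab y
  have h2 : a x - a y ≤ ‖a‖ * ‖x - y‖ := by
    have h := a.le_opNorm (x - y)
    rw [Real.norm_eq_abs] at h
    simpa [map_sub] using (abs_le.mp h).2
  nlinarith [sq_nonneg (‖x - y‖ - ‖a‖ / 2), norm_nonneg (x - y)]

lemma coupling_bound (hφ : ConvexOn ℝ Set.univ φ) (hab : ∀ y, a y + b ≤ φ y)
    (μ ν ξ : Measure (EuclideanSpace ℝ (Fin d)))
    [IsProbabilityMeasure μ] [IsProbabilityMeasure ν] [IsProbabilityMeasure ξ]
    (hμ2 : Integrable (fun x => ‖x‖ ^ 2) μ) (hν2 : Integrable (fun x => ‖x‖ ^ 2) ν)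
    (hξ2 : Integrable (fun x => ‖x‖ ^ 2) ξ)
    (hξν : ∀ ψ : EuclideanSpace ℝ (Fin d) → ℝ, ConvexOn ℝ Set.univ ψ →
      Integrable ψ ξ → Integrable ψ ν → ∫ x, ψ x ∂ξ ≤ ∫ x, ψ x ∂ν)
    (hint1 : Integrable (fun x => ⨅ y, (φ y + ‖x - y‖ ^ 2)) μ) (hint2 : Integrable φ ν)
    (π : Measure (EuclideanSpace ℝ (Fin d) × EuclideanSpace ℝ (Fin d)))
    (h1 : π.map Prod.fst = μ) (h2 : π.map Prod.snd = ξ) :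
    (∫ x, (⨅ y, (φ y + ‖x - y‖ ^ 2)) ∂μ) - ∫ y, φ y ∂ν ≤ ∫ p, dist p.1 p.2 ^ 2 ∂π := by
  obtain ⟨hφintξ, hle⟩ := integrable_and_le hφ hab ξ ν hξ2 hν2 hξν hint2
  have hφc : Continuous φ := continuousOn_univ.mp
    (hφ.continuousOn isOpen_univ)
  haveI : IsProbabilityMeasure π := by
    constructor
    have h : π Set.univ = μ Set.univ := by
      rw [← h1, Measure.map_apply measurable_fst MeasurableSet.univ, Set.preimage_univ]
    rw [h, measure_univ]
  have hQint : Integrable ((fun x => ⨅ y, (φ y + ‖x - y‖ ^ 2)) ∘ Prod.fst) π := by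
    rw [← integrable_map_measure (by rw [h1]; exact hint1.aestronglyMeasurable)
      measurable_fst.aemeasurable, h1]
    exact hint1
  have hφsnd : Integrable (φ ∘ Prod.snd) π := by
    rw [← integrable_map_measure (by rw [h2]; exact hφintξ.aestronglyMeasurable)
      measurable_snd.aemeasurable, h2]
    exact hφintξ
  have hfstn : Integrable ((fun x : EuclideanSpace ℝ (Fin d) => ‖x‖ ^ 2) ∘ Prod.fst) π := by
    rw [← integrable_map_measure (by rw [h1]; exact hμ2.aestronglyMeasurable)
      measurable_fst.aemeasurable, h1]
    exact hμ2
  have hsndn : Integrable ((fun x : EuclideanSpace ℝ (Fin d) => ‖x‖ ^ 2) ∘ Prod.snd) π := by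
    rw [← integrable_map_measure (by rw [h2]; exact hξ2.aestronglyMeasurable)
      measurable_snd.aemeasurable, h2]
    exact hξ2
  have hd2 : Integrable (fun p : EuclideanSpace ℝ (Fin d) × EuclideanSpace ℝ (Fin d) =>
      dist p.1 p.2 ^ 2) π := by
    refine Integrable.mono (g := fun p => 2 * ‖p.1‖ ^ 2 + 2 * ‖p.2‖ ^ 2)
      ((hfstn.const_mul 2).add (hsndn.const_mul 2)) ?_ ?_
    · exact ((continuous_fst.dist continuous_snd).pow 2).aestronglyMeasurable
    · refine Filter.Eventually.of_forall fun p => ?_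
      show ‖dist p.1 p.2 ^ 2‖ ≤ ‖2 * ‖p.1‖ ^ 2 + 2 * ‖p.2‖ ^ 2‖
      rw [Real.norm_eq_abs, Real.norm_eq_abs, abs_of_nonneg (by positivity),
        abs_of_nonneg (by positivity), dist_eq_norm]
      have h := norm_sub_le p.1 p.2
      nlinarith [norm_nonneg (p.1 - p.2), norm_nonneg p.1, norm_nonneg p.2,
        sq_nonneg (‖p.1‖ - ‖p.2‖)]
  have hQeq : ∫ x, (⨅ y, (φ y + ‖x - y‖ ^ 2)) ∂μ
      = ∫ p, ((fun x => ⨅ y, (φ y + ‖x - y‖ ^ 2)) ∘ Prod.fst) p ∂π := by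
    rw [← h1, integral_map measurable_fst.aemeasurable
      (by rw [h1]; exact hint1.aestronglyMeasurable)]
    rfl
  have hφeq : ∫ y, φ y ∂ξ = ∫ p, (φ ∘ Prod.snd) p ∂π := by
    rw [← h2, integral_map measurable_snd.aemeasurable
      (by rw [h2]; exact hφintξ.aestronglyMeasurable)]
    rfl
  have hpt : ∀ p : EuclideanSpace ℝ (Fin d) × EuclideanSpace ℝ (Fin d),
      ((fun x => ⨅ y, (φ y + ‖x - y‖ ^ 2)) ∘ Prod.fst) p
        ≤ (φ ∘ Prod.snd) p + dist p.1 p.2 ^ 2 := fun p => by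
    have := ciInf_le (q2_bddBelow hab p.1) p.2
    simp only [Function.comp_apply]
    rwa [dist_eq_norm]
  have hmain : ∫ p, ((fun x => ⨅ y, (φ y + ‖x - y‖ ^ 2)) ∘ Prod.fst) p ∂π
      ≤ ∫ p, (φ ∘ Prod.snd) p ∂π + ∫ p, dist p.1 p.2 ^ 2 ∂π := by
    rw [← integral_add hφsnd hd2]
    exact integral_mono hQint (hφsnd.add hd2) hpt
  rw [hQeq]
  have := hφeq ▸ hle
  linarith

end WDAux
end WDAux


/-- Weak duality for the backward Wasserstein projection: for convex `φ` bounded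
below by an affine function and any `ξ ⪯ ν`,
`∫ Q₂(φ) dμ − ∫ φ dν ≤ W₂²(μ, ξ)` where `Q₂(φ)(x) = inf_y (φ(y) + |x−y|²)`. -/
theorem weak_duality_backward_projection {d : ℕ}
    (φ : EuclideanSpace ℝ (Fin d) → ℝ) (hφ : ConvexOn ℝ Set.univ φ)
    (haff : ∃ (a : EuclideanSpace ℝ (Fin d) →L[ℝ] ℝ) (b : ℝ), ∀ y, a y + b ≤ φ y)
    (μ ν ξ : Measure (EuclideanSpace ℝ (Fin d)))
    [IsProbabilityMeasure μ] [IsProbabilityMeasure ν] [IsProbabilityMeasure ξ]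
    (hμ2 : HasP2 μ) (hν2 : HasP2 ν) (hξ2 : HasP2 ξ)
    (hξν : ConvexOrder ξ ν)
    (hint1 : Integrable (fun x => ⨅ y, (φ y + ‖x - y‖ ^ 2)) μ)
    (hint2 : Integrable φ ν) :
    (∫ x, (⨅ y, (φ y + ‖x - y‖ ^ 2)) ∂μ) - ∫ y, φ y ∂ν ≤ W2 μ ξ ^ 2 := by
  obtain ⟨a, b, hab⟩ := haff
  have hW : W2 μ ξ = sInf { r : ℝ |
      ∃ π : Measure (EuclideanSpace ℝ (Fin d) × EuclideanSpace ℝ (Fin d)),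
        π.map Prod.fst = μ ∧ π.map Prod.snd = ξ ∧
        r = (∫ p, dist p.1 p.2 ^ 2 ∂π) ^ (1 / 2 : ℝ) } := rfl
  have hS_ne : Set.Nonempty { r : ℝ |
      ∃ π : Measure (EuclideanSpace ℝ (Fin d) × EuclideanSpace ℝ (Fin d)),
        π.map Prod.fst = μ ∧ π.map Prod.snd = ξ ∧
        r = (∫ p, dist p.1 p.2 ^ 2 ∂π) ^ (1 / 2 : ℝ) } :=
    ⟨_, μ.prod ξ, by simp, by simp, rfl⟩
  have hkey : ∀ r ∈ { r : ℝ |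
      ∃ π : Measure (EuclideanSpace ℝ (Fin d) × EuclideanSpace ℝ (Fin d)),
        π.map Prod.fst = μ ∧ π.map Prod.snd = ξ ∧
        r = (∫ p, dist p.1 p.2 ^ 2 ∂π) ^ (1 / 2 : ℝ) },
      (∫ x, (⨅ y, (φ y + ‖x - y‖ ^ 2)) ∂μ) - ∫ y, φ y ∂ν ≤ r ^ 2 := by
    rintro r ⟨π, h1, h2, rfl⟩
    have hI0 : 0 ≤ ∫ p, dist p.1 p.2 ^ 2 ∂π := integral_nonneg fun p => sq_nonneg _
    have hsq : ((∫ p, dist p.1 p.2 ^ 2 ∂π) ^ (1 / 2 : ℝ)) ^ 2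
        = ∫ p, dist p.1 p.2 ^ 2 ∂π := by
      rw [← Real.rpow_natCast ((∫ p, dist p.1 p.2 ^ 2 ∂π) ^ (1 / 2 : ℝ)) 2,
        ← Real.rpow_mul hI0]
      norm_num
    rw [hsq]
    exact WDAux.coupling_bound hφ hab μ ν ξ hμ2 hν2 hξ2 hξν hint1 hint2 π h1 h2
  have hr0 : ∀ r ∈ { r : ℝ |
      ∃ π : Measure (EuclideanSpace ℝ (Fin d) × EuclideanSpace ℝ (Fin d)),
        π.map Prod.fst = μ ∧ π.map Prod.snd = ξ ∧
        r = (∫ p, dist p.1 p.2 ^ 2 ∂π) ^ (1 / 2 : ℝ) }, (0:ℝ) ≤ r := by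
    rintro r ⟨π, h1, h2, rfl⟩
    exact Real.rpow_nonneg (integral_nonneg fun p => sq_nonneg _) _
  by_cases hL0 : (∫ x, (⨅ y, (φ y + ‖x - y‖ ^ 2)) ∂μ) - ∫ y, φ y ∂ν ≤ 0
  · exact hL0.trans (sq_nonneg _)
  · push_neg at hL0
    have hsqrt : Real.sqrt ((∫ x, (⨅ y, (φ y + ‖x - y‖ ^ 2)) ∂μ) - ∫ y, φ y ∂ν)
        ≤ W2 μ ξ := by
      rw [hW]
      refine le_csInf hS_ne fun r hr => ?_
      calc Real.sqrt ((∫ x, (⨅ y, (φ y + ‖x - y‖ ^ 2)) ∂μ) - ∫ y, φ y ∂ν)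
          ≤ Real.sqrt (r ^ 2) := Real.sqrt_le_sqrt (hkey r hr)
        _ = r := Real.sqrt_sq (hr0 r hr)
    calc (∫ x, (⨅ y, (φ y + ‖x - y‖ ^ 2)) ∂μ) - ∫ y, φ y ∂ν
        = Real.sqrt ((∫ x, (⨅ y, (φ y + ‖x - y‖ ^ 2)) ∂μ) - ∫ y, φ y ∂ν) ^ 2 :=
          (Real.sq_sqrt hL0.le).symm
      _ ≤ W2 μ ξ ^ 2 := by gcongr
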